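/- Let λ ∈ ℝ and let z, φ : ℝ² → ℝ be smooth (C^∞) functions of (x,t) with φ(x,t) ≠ 0 for all (x,t), satisfying the Lax system φ_xx = −(z + λ) φ and φ_t = 2(2λ − z) φ_x + z_x φ. Then z satisfies the KdV equation z_t = −6 z z_x − z_xxx. -/

import Mathlib

/-- Partial derivative in the first variable `x`. -/
noncomputable def px (f : ℝ → ℝ → ℝ) : ℝ → ℝ → ℝ := fun x t => deriv (fun y => f y t) x

/-- Partial derivative in the second variable `t`. -/
noncomputable def pt (f : ℝ → ℝ → ℝ) : ℝ → ℝ → ℝ := fun x t => deriv (fun s => f x s) t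

lemma hasDerivAt_px (f : ℝ → ℝ → ℝ) (hf : ContDiff ℝ (⊤ : ℕ∞) (Function.uncurry f))
    (x t : ℝ) : HasDerivAt (fun y => f y t) (px f x t) x := by
  have h : DifferentiableAt ℝ (fun y => f y t) x :=
    by have := (hf.differentiable (by simp) (x, t)).comp x
        (DifferentiableAt.prodMk (differentiableAt_id (𝕜 := ℝ) (x := x)) (differentiableAt_const t)); exact this
  exact h.hasDerivAt

lemma hasDerivAt_pt (f : ℝ → ℝ → ℝ) (hf : ContDiff ℝ (⊤ : ℕ∞) (Function.uncurry f))
    (x t : ℝ) : HasDerivAt (fun s => f x s) (pt f x t) t := by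
  have h : DifferentiableAt ℝ (fun s => f x s) t :=
    (hf.differentiable (by simp) (x, t)).comp t
      (DifferentiableAt.prodMk (differentiableAt_const x) differentiableAt_id)
  exact h.hasDerivAt

lemma px_eq_fderiv (f : ℝ → ℝ → ℝ) (hf : ContDiff ℝ (⊤ : ℕ∞) (Function.uncurry f))
    (x t : ℝ) : px f x t = fderiv ℝ (Function.uncurry f) (x, t) (1, 0) := by
  have h1 : HasFDerivAt (Function.uncurry f) (fderiv ℝ (Function.uncurry f) (x, t)) (x, t) :=
    (hf.differentiable (by simp) (x, t)).hasFDerivAt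
  have h2 : HasDerivAt (fun y : ℝ => (y, t)) ((1 : ℝ), (0 : ℝ)) x :=
    HasDerivAt.prodMk (hasDerivAt_id x) (hasDerivAt_const x t)
  have h3 : HasDerivAt (fun y => f y t) (fderiv ℝ (Function.uncurry f) (x, t) (1, 0)) x :=
    by have := h1.comp_hasDerivAt x h2; exact this
  exact h3.deriv ▸ rfl

lemma pt_eq_fderiv (f : ℝ → ℝ → ℝ) (hf : ContDiff ℝ (⊤ : ℕ∞) (Function.uncurry f))
    (x t : ℝ) : pt f x t = fderiv ℝ (Function.uncurry f) (x, t) (0, 1) := by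
  have h1 : HasFDerivAt (Function.uncurry f) (fderiv ℝ (Function.uncurry f) (x, t)) (x, t) :=
    (hf.differentiable (by simp) (x, t)).hasFDerivAt
  have h2 : HasDerivAt (fun s : ℝ => (x, s)) ((0 : ℝ), (1 : ℝ)) t :=
    HasDerivAt.prodMk (hasDerivAt_const t x) (hasDerivAt_id t)
  have h3 : HasDerivAt (fun s => f x s) (fderiv ℝ (Function.uncurry f) (x, t) (0, 1)) t :=
    h1.comp_hasDerivAt t h2
  exact h3.deriv ▸ rfl

lemma contDiff_px (f : ℝ → ℝ → ℝ) (hf : ContDiff ℝ (⊤ : ℕ∞) (Function.uncurry f)) :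
    ContDiff ℝ (⊤ : ℕ∞) (Function.uncurry (px f)) := by
  have e : Function.uncurry (px f)
      = fun p : ℝ × ℝ => fderiv ℝ (Function.uncurry f) p (1, 0) := by
    funext p
    exact px_eq_fderiv f hf p.1 p.2
  rw [e]
  exact (hf.fderiv_right (mod_cast le_top)).clm_apply contDiff_const

lemma contDiff_pt (f : ℝ → ℝ → ℝ) (hf : ContDiff ℝ (⊤ : ℕ∞) (Function.uncurry f)) :
    ContDiff ℝ (⊤ : ℕ∞) (Function.uncurry (pt f)) := by
  have e : Function.uncurry (pt f)
      = fun p : ℝ × ℝ => fderiv ℝ (Function.uncurry f) p (0, 1) := by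
    funext p
    exact pt_eq_fderiv f hf p.1 p.2
  rw [e]
  exact (hf.fderiv_right (mod_cast le_top)).clm_apply contDiff_const

lemma clairaut (f : ℝ → ℝ → ℝ) (hf : ContDiff ℝ (⊤ : ℕ∞) (Function.uncurry f)) :
    ∀ x t, px (pt f) x t = pt (px f) x t := by
  intro x t
  set F := Function.uncurry f with hF
  have hdF : ∀ p, HasFDerivAt F (fderiv ℝ F p) p :=
    fun p => (hf.differentiable (by simp) p).hasFDerivAt
  have hF' : ContDiff ℝ (⊤ : ℕ∞) (fderiv ℝ F) := hf.fderiv_right (mod_cast le_top)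
  have hdF' : HasFDerivAt (fderiv ℝ F) (fderiv ℝ (fderiv ℝ F) (x, t)) (x, t) :=
    (hF'.differentiable (by simp) (x, t)).hasFDerivAt
  have hsymm := second_derivative_symmetric hdF hdF' ((1 : ℝ), (0 : ℝ)) ((0 : ℝ), (1 : ℝ))
  have h1 : HasFDerivAt (fun p : ℝ × ℝ => fderiv ℝ F p ((0 : ℝ), (1 : ℝ)))
      ((ContinuousLinearMap.apply ℝ ℝ ((0 : ℝ), (1 : ℝ))).comp
        (fderiv ℝ (fderiv ℝ F) (x, t))) (x, t) :=
    ((ContinuousLinearMap.apply ℝ ℝ ((0 : ℝ), (1 : ℝ))).hasFDerivAt).comp (x, t) hdF'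
  have h2 : HasFDerivAt (fun p : ℝ × ℝ => fderiv ℝ F p ((1 : ℝ), (0 : ℝ)))
      ((ContinuousLinearMap.apply ℝ ℝ ((1 : ℝ), (0 : ℝ))).comp
        (fderiv ℝ (fderiv ℝ F) (x, t))) (x, t) :=
    ((ContinuousLinearMap.apply ℝ ℝ ((1 : ℝ), (0 : ℝ))).hasFDerivAt).comp (x, t) hdF'
  have e1 : Function.uncurry (pt f) = fun p : ℝ × ℝ => fderiv ℝ F p (0, 1) :=
    funext fun p => pt_eq_fderiv f hf p.1 p.2
  have e2 : Function.uncurry (px f) = fun p : ℝ × ℝ => fderiv ℝ F p (1, 0) :=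
    funext fun p => px_eq_fderiv f hf p.1 p.2
  rw [px_eq_fderiv (pt f) (contDiff_pt f hf) x t, pt_eq_fderiv (px f) (contDiff_px f hf) x t,
    e1, e2, h1.fderiv, h2.fderiv]
  simpa using hsymm

/-- if `(z, φ)` (with `φ` nonvanishing) solves the Lax system
`φ_xx = −(z+λ)φ`, `φ_t = 2(2λ−z)φ_x + z_x φ`, then `z` solves the KdV equation
`z_t = −6zz_x − z_xxx`. -/
theorem lax_implies_kdv (lam : ℝ) (z φ : ℝ → ℝ → ℝ)
    (hz : ContDiff ℝ (⊤ : ℕ∞) (Function.uncurry z))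
    (hφ : ContDiff ℝ (⊤ : ℕ∞) (Function.uncurry φ))
    (hnz : ∀ x t, φ x t ≠ 0)
    (hxx : ∀ x t, px (px φ) x t = -(z x t + lam) * φ x t)
    (ht : ∀ x t, pt φ x t = 2 * (2 * lam - z x t) * px φ x t + px z x t * φ x t) :
    ∀ x t, pt z x t = -6 * z x t * px z x t - px (px (px z)) x t := by
  have hzx : ContDiff ℝ (⊤ : ℕ∞) (Function.uncurry (px z)) := contDiff_px z hz
  have hzxx : ContDiff ℝ (⊤ : ℕ∞) (Function.uncurry (px (px z))) := contDiff_px _ hzx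
  have hφx : ContDiff ℝ (⊤ : ℕ∞) (Function.uncurry (px φ)) := contDiff_px φ hφ
  -- Step 1: φ_tx
  have step1 : ∀ x t, px (pt φ) x t =
      -(px z x t * px φ x t)
        + (px (px z) x t - 2 * (2 * lam - z x t) * (z x t + lam)) * φ x t := by
    intro x t
    have hz' := hasDerivAt_px z hz x t
    have hφ' := hasDerivAt_px φ hφ x t
    have hzx' := hasDerivAt_px (px z) hzx x t
    have hφx' := hasDerivAt_px (px φ) hφx x t
    have H : HasDerivAt (fun y => 2 * (2 * lam - z y t) * px φ y t + px z y t * φ y t)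
        (2 * (0 - px z x t) * px φ x t + 2 * (2 * lam - z x t) * px (px φ) x t
          + (px (px z) x t * φ x t + px z x t * px φ x t)) x :=
      ((((hasDerivAt_const x (2 * lam)).sub hz').const_mul 2).mul hφx').add (hzx'.mul hφ')
    have e1 : px (pt φ) x t
        = deriv (fun y => 2 * (2 * lam - z y t) * px φ y t + px z y t * φ y t) x := by
      unfold px
      congr 1
      funext y
      exact ht y t
    rw [e1, H.deriv, hxx x t]
    ring
  -- Step 2: φ_txx
  have step2 : ∀ x t, px (px (pt φ)) x t =
      (px (px (px z)) x t + px z x t * (5 * z x t - lam)) * φ x t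
        - 2 * (2 * lam - z x t) * (z x t + lam) * px φ x t := by
    intro x t
    have hz' := hasDerivAt_px z hz x t
    have hφ' := hasDerivAt_px φ hφ x t
    have hzx' := hasDerivAt_px (px z) hzx x t
    have hφx' := hasDerivAt_px (px φ) hφx x t
    have hzxx' := hasDerivAt_px (px (px z)) hzxx x t
    have H : HasDerivAt (fun y =>
        -(px z y t * px φ y t)
          + (px (px z) y t - 2 * (2 * lam - z y t) * (z y t + lam)) * φ y t)
        (-(px (px z) x t * px φ x t + px z x t * px (px φ) x t)
          + ((px (px (px z)) x t
              - (2 * (0 - px z x t) * (z x t + lam)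
                + 2 * (2 * lam - z x t) * (px z x t + 0))) * φ x t
            + (px (px z) x t - 2 * (2 * lam - z x t) * (z x t + lam)) * px φ x t)) x :=
      ((hzx'.mul hφx').neg).add
        ((hzxx'.sub ((((hasDerivAt_const x (2 * lam)).sub hz').const_mul 2).mul
          (hz'.add (hasDerivAt_const x lam)))).mul hφ')
    have e1 : px (px (pt φ)) x t
        = deriv (fun y =>
            -(px z y t * px φ y t)
              + (px (px z) y t - 2 * (2 * lam - z y t) * (z y t + lam)) * φ y t) x := by
      unfold px
      congr 1
      funext y
      exact step1 y t
    rw [e1, H.deriv, hxx x t]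
    ring
  -- Step 3: (φ_xx)_t
  have step3 : ∀ x t, pt (px (px φ)) x t =
      -(pt z x t) * φ x t
        - (z x t + lam) * (2 * (2 * lam - z x t) * px φ x t + px z x t * φ x t) := by
    intro x t
    have hzT := hasDerivAt_pt z hz x t
    have hφT := hasDerivAt_pt φ hφ x t
    have H : HasDerivAt (fun s => -(z x s + lam) * φ x s)
        (-(pt z x t + 0) * φ x t + -(z x t + lam) * pt φ x t) t :=
      ((hzT.add (hasDerivAt_const t lam)).neg).mul hφT
    have e1 : pt (px (px φ)) x t = deriv (fun s => -(z x s + lam) * φ x s) t := by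
      unfold pt
      congr 1
      funext s
      exact hxx x s
    rw [e1, H.deriv, ht x t]
    ring
  -- Step 4: equality of mixed partials
  have step4 : ∀ x t, px (px (pt φ)) x t = pt (px (px φ)) x t := by
    intro x t
    have e1 : px (px (pt φ)) x t = px (pt (px φ)) x t := by
      unfold px
      congr 1
      funext y
      exact clairaut φ hφ y t
    rw [e1]
    exact clairaut (px φ) hφx x t
  intro x t
  have hXY : (px (px (px z)) x t + px z x t * (5 * z x t - lam)) * φ x t
        - 2 * (2 * lam - z x t) * (z x t + lam) * px φ x t
      = -(pt z x t) * φ x t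
        - (z x t + lam) * (2 * (2 * lam - z x t) * px φ x t + px z x t * φ x t) := by
    rw [← step2 x t, step4 x t, step3 x t]
  have key : (pt z x t + 6 * z x t * px z x t + px (px (px z)) x t) * φ x t = 0 := by
    linear_combination hXY
  rcases mul_eq_zero.mp key with h | h
  · linarith
  · exact absurd h (hnz x t)
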